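/- (Corollary: sufficiency) If U : X → ℤ∪{∞} with U(c) = ∞ is closed under Rules 1 and 2, and U(x) > ω°(x,c) − W for all x ≠ c, then there exists a single vote ζ (bijection X → {1,…,|X|}) such that, with ω•(x,y) = ω°(x,y)+W when ζ(x) > ζ(y) and ω°(x,y)−W when ζ(x) < ζ(y), c is the unique Schulze winner: S[ω•](c,x) > S[ω•](x,c) for all x ≠ c. -/

import Mathlib

open scoped Classical

namespace Schulze

def pstr {X : Type} (ω : X → X → WithTop ℤ) : List X → WithTop ℤ
  | a :: b :: l => min (ω a b) (pstr ω (b :: l))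
  | _ => ⊤

def IsPath {X : Type} (x y : X) (p : List X) : Prop :=
  p.Nodup ∧ p.head? = some x ∧ p.getLast? = some y

noncomputable def S {X : Type} [Fintype X] [DecidableEq X]
    (ω : X → X → WithTop ℤ) (x y : X) : WithBot (WithTop ℤ) :=
  (Finset.univ.filter (fun p : {l : List X // l.Nodup} => IsPath x y p.1)).sup
    (fun p => ((pstr ω p.1 : WithTop ℤ) : WithBot (WithTop ℤ)))

def ofInt {X : Type} (ω : X → X → ℤ) : X → X → WithTop ℤ := fun x y => (ω x y : ℤ)


variable {X : Type}

lemma getLast?_cons_ne_nil (a : X) {q : List X} (h : q ≠ []) :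
    (a :: q).getLast? = q.getLast? := by
  cases q with
  | nil => exact absurd rfl h
  | cons b t => rw [List.getLast?_cons_cons]

lemma pstr_cons_le_tail (ν : X → X → WithTop ℤ) (a : X) (p : List X) (hp : p ≠ []) :
    pstr ν (a :: p) ≤ pstr ν p := by
  cases p with
  | nil => simp at hp
  | cons b l => exact min_le_right _ _

lemma pstr_cons_le_head (ν : X → X → WithTop ℤ) (a b : X) (l : List X) :
    pstr ν (a :: b :: l) ≤ ν a b := min_le_left _ _

lemma pstr_concat (ν : X → X → WithTop ℤ) (b : X) :
    ∀ (p : List X) (a : X), p.getLast? = some a →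
      pstr ν (p ++ [b]) = min (pstr ν p) (ν a b)
  | [], a, h => by simp at h
  | [x], a, h => by
      simp only [List.getLast?_singleton, Option.some.injEq] at h
      subst h
      simp [pstr, min_comm]
  | x :: y :: t, a, h => by
      have h' : (y :: t).getLast? = some a := by
        rwa [List.getLast?_cons_cons] at h
      show min (ν x y) (pstr ν ((y :: t) ++ [b])) = min (min (ν x y) (pstr ν (y :: t))) (ν a b)
      rw [pstr_concat ν b (y :: t) a h', min_assoc]

lemma exists_transition (ν : X → X → WithTop ℤ) (P : X → Prop) :
    ∀ (p : List X) (y : X), p.getLast? = some y → P y →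
      (∀ x, p.head? = some x → ¬ P x) →
      ∃ u v, ¬ P u ∧ P v ∧ pstr ν p ≤ ν u v
  | [], y, hl, _, _ => by simp at hl
  | [z], y, hl, hy, hh => by
      simp only [List.getLast?_singleton, Option.some.injEq] at hl
      subst hl
      exact absurd hy (hh _ rfl)
  | z :: b :: t, y, hl, hy, hh => by
      by_cases hb : P b
      · exact ⟨z, b, hh z rfl, hb, pstr_cons_le_head ν z b t⟩
      · have hl' : (b :: t).getLast? = some y := by rwa [List.getLast?_cons_cons] at hl
        obtain ⟨u, v, h1, h2, h3⟩ := exists_transition ν P (b :: t) y hl' hy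
          (by rintro x hx; simp only [List.head?_cons, Option.some.injEq] at hx; subst hx; exact hb)
        exact ⟨u, v, h1, h2, le_trans (pstr_cons_le_tail ν z (b :: t) (by simp)) h3⟩

variable [Fintype X] [DecidableEq X]

lemma le_S_of_path (ν : X → X → WithTop ℤ) {x y : X} {p : List X} (hnd : p.Nodup)
    (hp : IsPath x y p) : ((pstr ν p : WithTop ℤ) : WithBot (WithTop ℤ)) ≤ S ν x y := by
  unfold S
  exact Finset.le_sup
    (f := fun q : {l : List X // l.Nodup} => ((pstr ν q.1 : WithTop ℤ) : WithBot (WithTop ℤ)))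
    (b := ⟨p, hnd⟩)
    (by rw [Finset.mem_filter]; exact ⟨Finset.mem_univ _, hp⟩)

lemma exists_path_of_le_S (ν : X → X → WithTop ℤ) {x y : X} {u : WithTop ℤ}
    (h : (u : WithBot (WithTop ℤ)) ≤ S ν x y) :
    ∃ p : List X, p.Nodup ∧ IsPath x y p ∧ u ≤ pstr ν p := by
  unfold S at h
  rw [Finset.le_sup_iff (WithBot.bot_lt_coe u)] at h
  obtain ⟨⟨p, hnd⟩, hmem, hle⟩ := h
  rw [Finset.mem_filter] at hmem
  exact ⟨p, hnd, hmem.2, by exact_mod_cast hle⟩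

lemma exists_prefix_to (ν : X → X → WithTop ℤ) {b : X} :
    ∀ (p : List X), b ∈ p →
      ∃ q, q <+: p ∧ q ≠ [] ∧ q.getLast? = some b ∧ pstr ν p ≤ pstr ν q
  | [], hb => by simp at hb
  | a :: t, hb => by
      by_cases hba : b = a
      · subst hba
        exact ⟨[b], ⟨t, rfl⟩, by simp, rfl, le_top⟩
      · have hbt : b ∈ t := by
          rcases List.mem_cons.1 hb with h | h
          · exact absurd h hba
          · exact h
        obtain ⟨q', hpre, hne, hlast, hle⟩ := exists_prefix_to ν t hbt
        refine ⟨a :: q', ?_, by simp, ?_, ?_⟩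
        · obtain ⟨r, hr⟩ := hpre
          exact ⟨r, by rw [List.cons_append, hr]⟩
        · rw [getLast?_cons_ne_nil a hne]; exact hlast
        · cases t with
          | nil => simp at hbt
          | cons h t' =>
            obtain ⟨q'', rfl⟩ : ∃ q'', q' = h :: q'' := by
              rcases q' with _ | ⟨qh, qt⟩
              · exact absurd rfl hne
              · obtain ⟨r, hr⟩ := hpre
                simp only [List.cons_append, List.cons.injEq] at hr
                exact ⟨qt, by rw [hr.1]⟩
            show min (ν a h) (pstr ν (h :: t')) ≤ min (ν a h) (pstr ν (h :: q''))
            exact min_le_min le_rfl hle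

lemma le_S_step (ν : X → X → WithTop ℤ) {x a b : X} {u : WithTop ℤ} (hxb : x ≠ b)
    (h1 : (u : WithBot (WithTop ℤ)) ≤ S ν x a) (h2 : u ≤ ν a b) :
    (u : WithBot (WithTop ℤ)) ≤ S ν x b := by
  obtain ⟨p, hnd, ⟨_, hh, hl⟩, hle⟩ := exists_path_of_le_S ν h1
  have hpn : p ≠ [] := by rintro rfl; simp at hh
  by_cases hb : b ∈ p
  · obtain ⟨q, hpre, hne, hlast, hple⟩ := exists_prefix_to ν p hb
    have hqnd : q.Nodup := hpre.sublist.nodup hnd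
    have hqh : q.head? = some x := by
      obtain ⟨r, rfl⟩ := hpre
      rw [List.head?_append_of_ne_nil q hne] at hh
      exact hh
    have hS := le_S_of_path ν hqnd ⟨hqnd, hqh, hlast⟩
    refine le_trans ?_ hS
    exact_mod_cast le_trans hle hple
  · have hnd' : (p ++ [b]).Nodup := by
      rw [List.nodup_append']
      exact ⟨hnd, List.nodup_singleton b, by intro z hz hz'; simp at hz'; subst hz'; exact hb hz⟩
    have hh' : (p ++ [b]).head? = some x := by
      rw [List.head?_append_of_ne_nil p hpn]; exact hh
    have hl' : (p ++ [b]).getLast? = some b := List.getLast?_concat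
    have hS := le_S_of_path ν hnd' ⟨hnd', hh', hl'⟩
    refine le_trans ?_ hS
    rw [pstr_concat ν b p a hl]
    exact_mod_cast le_min hle h2

lemma sublist_index_lt {u v : X} : ∀ (L : List X), [u, v].Sublist L → L.Nodup →
    L.idxOf u < L.idxOf v
  | [], h, _ => by simp at h
  | a :: t, h, nd => by
    rcases List.nodup_cons.1 nd with ⟨hat, hnt⟩
    cases h with
    | cons _ h' =>
      have hu : u ∈ t := h'.subset (by simp)
      have hv : v ∈ t := h'.subset (by simp)
      have hua : u ≠ a := by rintro rfl; exact hat hu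
      have hva : v ≠ a := by rintro rfl; exact hat hv
      rw [List.idxOf_cons_ne t hua.symm, List.idxOf_cons_ne t hva.symm]
      exact Nat.succ_lt_succ (sublist_index_lt t h' hnt)
    | cons_cons _ h' =>
      have hv : v ∈ t := h'.subset (by simp)
      have hva : v ≠ u := by rintro rfl; exact hat hv
      rw [List.idxOf_cons_self, List.idxOf_cons_ne t hva.symm]
      exact Nat.succ_pos _

lemma pstr_lt_of_edges (ν : X → X → WithTop ℤ) (U : X → WithTop ℤ) (c : X)
    (hedge : ∀ a b : X, a ≠ c → (b = c ∨ U a < U b) → ν a b < U a) :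
    ∀ (p : List X) (x : X), p.head? = some x → p.getLast? = some c → x ≠ c →
      pstr ν p < U x
  | [], x, hh, _, _ => by simp at hh
  | [z], x, hh, hl, hxc => by
    simp only [List.head?_cons, Option.some.injEq] at hh
    simp only [List.getLast?_singleton, Option.some.injEq] at hl
    exact absurd (hl.symm.trans hh) (Ne.symm hxc)
  | z :: b :: t, x, hh, hl, hxc => by
    simp only [List.head?_cons, Option.some.injEq] at hh
    subst hh
    by_cases hcase : b = c ∨ U z < U b
    · exact lt_of_le_of_lt (pstr_cons_le_head ν z b t) (hedge z b hxc hcase)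
    · push_neg at hcase
      obtain ⟨hbc, hUb⟩ := hcase
      have hl' : (b :: t).getLast? = some c := by rwa [List.getLast?_cons_cons] at hl
      have ih := pstr_lt_of_edges ν U c hedge (b :: t) b rfl hl' hbc
      exact lt_of_le_of_lt (pstr_cons_le_tail ν z (b :: t) (by simp))
        (lt_of_lt_of_le ih hUb)

lemma build (ωo : X → X → ℤ) (W : ℤ) (c : X) (U : X → WithTop ℤ)
    (hR1 : ∀ x : X, x ≠ c → ((U x : WithBot (WithTop ℤ)))
        ≤ S (fun y z => min (((ωo y z + W : ℤ) : WithTop ℤ)) (U z)) c x) :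
    ∀ (k : ℕ) (L : List X), L.Nodup → L.head? = some c →
      List.Pairwise (fun a b => U b ≤ U a) L →
      (∀ v ∈ L, v ≠ c → ∃ u, [u, v].Sublist L ∧ U v ≤ ((ωo u v + W : ℤ) : WithTop ℤ)) →
      (∀ z, z ∉ L → ∀ y ∈ L, U z ≤ U y) →
      L.length + k = Fintype.card X →
      ∃ L' : List X, L'.Nodup ∧ L'.head? = some c ∧
        List.Pairwise (fun a b => U b ≤ U a) L' ∧
        (∀ v ∈ L', v ≠ c → ∃ u, [u, v].Sublist L' ∧ U v ≤ ((ωo u v + W : ℤ) : WithTop ℤ)) ∧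
        (∀ x : X, x ∈ L') ∧ L'.length = Fintype.card X := by
  intro k
  induction k with
  | zero =>
    intro L hnd hhd hpw h5 hinv hlen
    refine ⟨L, hnd, hhd, hpw, h5, ?_, by omega⟩
    intro x
    have huniv : L.toFinset = Finset.univ :=
      Finset.eq_univ_of_card _ (by rw [List.toFinset_card_of_nodup hnd]; omega)
    rw [← List.mem_toFinset, huniv]
    exact Finset.mem_univ x
  | succ k ih =>
    intro L hnd hhd hpw h5 hinv hlen
    have hcL : c ∈ L := by
      cases L with
      | nil => simp at hhd
      | cons a t =>
        simp only [List.head?_cons, Option.some.injEq] at hhd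
        exact hhd ▸ List.mem_cons_self
    have hrem : ∃ x, x ∉ L := by
      by_contra hco
      push_neg at hco
      have hsub : Finset.univ ⊆ L.toFinset := fun x _ => List.mem_toFinset.2 (hco x)
      have hc := Finset.card_le_card hsub
      rw [List.toFinset_card_of_nodup hnd, Finset.card_univ] at hc
      omega
    obtain ⟨x₁, hx₁⟩ := hrem
    obtain ⟨x₀, hx₀mem, hx₀max⟩ := Finset.exists_max_image
      (Finset.univ.filter (fun z => z ∉ L)) U ⟨x₁, by simp [hx₁]⟩
    rw [Finset.mem_filter] at hx₀mem
    have hx₀L : x₀ ∉ L := hx₀mem.2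
    have hx₀c : x₀ ≠ c := fun e => hx₀L (e ▸ hcL)
    obtain ⟨p, hpnd, ⟨_, hph, hpl⟩, hple⟩ := exists_path_of_le_S _ (hR1 x₀ hx₀c)
    obtain ⟨u, v, hu, hv, hedge⟩ := exists_transition _ (fun z => z ∉ L) p x₀ hpl hx₀L
      (by
        intro x hx
        rw [hph] at hx
        obtain rfl : c = x := by simpa using hx
        exact not_not.2 hcL)
    have hu' : u ∈ L := not_not.1 hu
    have hb1 : U x₀ ≤ ((ωo u v + W : ℤ) : WithTop ℤ) :=
      le_trans hple (le_trans hedge (min_le_left _ _))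
    have hb2 : U x₀ ≤ U v := le_trans hple (le_trans hedge (min_le_right _ _))
    have hvmax : U v ≤ U x₀ := hx₀max v (by simp [hv])
    have hLne : L ≠ [] := by rintro rfl; simp at hcL
    refine ih (L ++ [v]) ?_ ?_ ?_ ?_ ?_ ?_
    · rw [List.nodup_append']
      refine ⟨hnd, List.nodup_singleton v, ?_⟩
      intro z hz hz'
      simp only [List.mem_singleton] at hz'
      exact hv (hz' ▸ hz)
    · rw [List.head?_append_of_ne_nil L hLne]; exact hhd
    · rw [List.pairwise_append]
      refine ⟨hpw, List.pairwise_singleton _ _, ?_⟩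
      intro a ha b hb
      simp only [List.mem_singleton] at hb
      rw [hb]
      exact hinv v hv a ha
    · intro v' hv' hv'c
      rcases List.mem_append.1 hv' with h | h
      · obtain ⟨u₀, hsub, hbd⟩ := h5 v' h hv'c
        exact ⟨u₀, hsub.trans (List.sublist_append_left L [v]), hbd⟩
      · simp only [List.mem_singleton] at h
        refine ⟨u, ?_, ?_⟩
        · rw [h]
          exact List.Sublist.append (List.singleton_sublist.2 hu') (List.Sublist.refl [v])
        · rw [h]
          exact le_trans hvmax hb1
    · intro z hz y hy
      have hzL : z ∉ L := fun h => hz (List.mem_append.2 (Or.inl h))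
      rcases List.mem_append.1 hy with h | h
      · exact hinv z hzL y h
      · simp only [List.mem_singleton] at h
        rw [h]
        exact le_trans (hx₀max z (by simp [hzL])) hb2
    · simp only [List.length_append, List.length_singleton]
      omega

theorem stmt14 {X : Type} [Fintype X] [DecidableEq X]
    (ωo : X → X → ℤ) (hskew : ∀ x y : X, x ≠ y → ωo x y = - ωo y x)
    (W : ℤ) (hW : 1 ≤ W) (c : X)
    (U : X → WithTop ℤ) (hUc : U c = ⊤)
    (hR1 : ∀ x : X, x ≠ c →
      ((U x : WithBot (WithTop ℤ)))
        ≤ S (fun y z => min (((ωo y z + W : ℤ) : WithTop ℤ)) (U z)) c x)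
    (hR2 : ¬ ∃ x y : X, x ≠ c ∧ y ≠ c ∧ U y < U x ∧ U y ≤ ((ωo y x - W : ℤ) : WithTop ℤ))
    (hup : ∀ x : X, x ≠ c → ((ωo x c - W : ℤ) : WithTop ℤ) < U x) :
    ∃ ζ : X ≃ Fin (Fintype.card X),
      ∀ x : X, x ≠ c →
        S (ofInt (fun a b => if (ζ b : ℕ) < (ζ a : ℕ) then ωo a b + W else ωo a b - W)) x c
          < S (ofInt (fun a b => if (ζ b : ℕ) < (ζ a : ℕ) then ωo a b + W else ωo a b - W)) c x := by
  classical
  have hcard : 0 < Fintype.card X := Fintype.card_pos_iff.2 ⟨c⟩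
  obtain ⟨L, hnd, hhd, hpw, h5, hall, hlen⟩ :=
    build ωo W c U hR1 (Fintype.card X - 1) [c] (by simp) rfl (by simp)
      (by intro v hv hvc; simp only [List.mem_singleton] at hv; exact absurd hv hvc)
      (by
        intro z hz y hy
        simp only [List.mem_singleton] at hy
        rw [hy, hUc]
        exact le_top)
      (by simp only [List.length_singleton]; omega)
  have hidx : ∀ a : X, L.idxOf a < Fintype.card X :=
    fun a => hlen ▸ List.idxOf_lt_length_iff.2 (hall a)
  refine ⟨(((hnd.getEquivOfForallMemList L hall).symm.trans (finCongr hlen)).trans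
      (Function.Involutive.toPerm Fin.rev Fin.rev_rev)), ?_⟩
  set ζ : X ≃ Fin (Fintype.card X) :=
    (((hnd.getEquivOfForallMemList L hall).symm.trans (finCongr hlen)).trans
      (Function.Involutive.toPerm Fin.rev Fin.rev_rev)) with hζdef
  set F : X → X → WithTop ℤ :=
    ofInt (fun a b => if (ζ b : ℕ) < (ζ a : ℕ) then ωo a b + W else ωo a b - W) with hF
  have hζv : ∀ a : X, (ζ a : ℕ) = Fintype.card X - (L.idxOf a + 1) := by
    intro a
    rw [hζdef]
    simp only [Equiv.trans_apply, Function.Involutive.coe_toPerm]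
    erw [Fin.val_rev]
    rfl
  have hζ : ∀ a b : X, ((ζ b : ℕ) < (ζ a : ℕ)) ↔ L.idxOf a < L.idxOf b := by
    intro a b
    have ha := hidx a
    have hb := hidx b
    rw [hζv a, hζv b]
    omega
  have hplus : ∀ a b : X, L.idxOf a < L.idxOf b →
      F a b = ((ωo a b + W : ℤ) : WithTop ℤ) := by
    intro a b h
    show ((if (ζ b : ℕ) < (ζ a : ℕ) then ωo a b + W else ωo a b - W : ℤ) : WithTop ℤ) = _
    rw [if_pos ((hζ a b).2 h)]
  have hminus : ∀ a b : X, ¬ (L.idxOf a < L.idxOf b) →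
      F a b = ((ωo a b - W : ℤ) : WithTop ℤ) := by
    intro a b h
    show ((if (ζ b : ℕ) < (ζ a : ℕ) then ωo a b + W else ωo a b - W : ℤ) : WithTop ℤ) = _
    rw [if_neg (fun hc => h ((hζ a b).1 hc))]
  have hidxc : L.idxOf c = 0 := by
    cases L with
    | nil => simp at hhd
    | cons a t =>
      simp only [List.head?_cons, Option.some.injEq] at hhd
      rw [← hhd, List.idxOf_cons_self]
  have hpair : ∀ a b : X, L.idxOf a < L.idxOf b → U b ≤ U a := by
    intro a b h
    have hil : L.idxOf a < L.length := List.idxOf_lt_length_iff.2 (hall a)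
    have hjl : L.idxOf b < L.length := List.idxOf_lt_length_iff.2 (hall b)
    have := List.pairwise_iff_get.1 hpw ⟨L.idxOf a, hil⟩ ⟨L.idxOf b, hjl⟩
      (by rw [Fin.lt_def]; exact h)
    simpa only [List.get_eq_getElem, List.getElem_idxOf] using this
  -- lower bound: U x ≤ S F c x
  have lower : ∀ k : ℕ, ∀ x : X, L.idxOf x = k →
      ((U x : WithBot (WithTop ℤ))) ≤ S F c x := by
    intro k
    induction k using Nat.strong_induction_on with
    | _ k ih =>
      intro x hx
      by_cases hxc : x = c
      · subst hxc
        have hp := le_S_of_path F (List.nodup_singleton x) ⟨List.nodup_singleton x, rfl, rfl⟩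
        rw [hUc]
        exact hp
      · obtain ⟨u, hsub, hbound⟩ := h5 x (hall x) hxc
        have hlt := sublist_index_lt L hsub hnd
        have hSu : ((U u : WithBot (WithTop ℤ))) ≤ S F c u := ih (L.idxOf u) (hx ▸ hlt) u rfl
        have hSx : ((U x : WithBot (WithTop ℤ))) ≤ S F c u :=
          le_trans (WithBot.coe_le_coe.2 (hpair u x hlt)) hSu
        refine le_S_step F (fun h => hxc h.symm) hSx ?_
        rw [hplus u x hlt]
        exact hbound
  -- edge condition for upper bound
  have hedge : ∀ a b : X, a ≠ c → (b = c ∨ U a < U b) → F a b < U a := by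
    intro a b hac hcase
    by_cases hbc : b = c
    · rw [hbc, hminus a c (by rw [hidxc]; omega)]
      exact hup a hac
    · have hUab : U a < U b := by
        rcases hcase with h | h
        · exact absurd h hbc
        · exact h
      have hnle : ¬ (U a ≤ ((ωo a b - W : ℤ) : WithTop ℤ)) := by
        intro hle
        exact hR2 ⟨b, a, hbc, hac, hUab, hle⟩
      have hni : ¬ (L.idxOf a < L.idxOf b) := by
        intro h
        exact absurd hUab (not_lt.2 (hpair a b h))
      rw [hminus a b hni]
      exact lt_of_not_ge hnle
  intro x hxc
  have hUp : ((U x : WithBot (WithTop ℤ))) ≤ S F c x := lower (L.idxOf x) x rfl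
  have hlow : S F x c < ((U x : WithBot (WithTop ℤ))) := by
    unfold S
    rw [Finset.sup_lt_iff (WithBot.bot_lt_coe _)]
    rintro ⟨p, hndp⟩ hmem
    rw [Finset.mem_filter] at hmem
    obtain ⟨_, _, hh, hl⟩ := hmem
    exact WithBot.coe_lt_coe.2 (pstr_lt_of_edges F U c hedge p x hh hl hxc)
  exact lt_of_lt_of_le hlow hUp

end Schulze
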